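/- Let p ≥ 1, let 0 ≤ k₁ ≤ p and 0 ≤ k₂ ≤ p, and let P : Fin (p+1) × Fin (p+1) → ℝ be control values of a tensor-product Bézier function B(ξ₁,ξ₂) = Σ_{i=0}^{p} Σ_{j=0}^{p} P_{ij} B_i^p(ξ₁) B_j^p(ξ₂). Then sup_{(ξ₁,ξ₂) ∈ [0,1]²} |∂^{k₁}_{ξ₁} ∂^{k₂}_{ξ₂} B(ξ₁,ξ₂)| ≤ (p!/(p−k₁)!) (p!/(p−k₂)!) · max_{0 ≤ i ≤ p−k₁, 0 ≤ j ≤ p−k₂} | Σ_{r=0}^{k₁} Σ_{s=0}^{k₂} (−1)^{k₁−r} (−1)^{k₂−s} C(k₁,r) C(k₂,s) P_{(i+r)(j+s)} |. -/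

import Mathlib

/-- The `i`-th Bernstein polynomial of degree `p`: `B_i^p(ξ) = C(p,i) ξ^i (1-ξ)^(p-i)`. -/
def bern (p i : ℕ) (ξ : ℝ) : ℝ := (p.choose i : ℝ) * ξ ^ i * (1 - ξ) ^ (p - i)

open Finset

noncomputable def fdiff : ℕ → (ℕ → ℝ) → (ℕ → ℝ)
  | 0, a => a
  | k+1, a => fdiff k (fun i => a (i+1) - a i)

lemma fdiff_shift (k : ℕ) (a : ℕ → ℝ) (i : ℕ) :
    fdiff k (fun j => a (j+1) - a j) i = fdiff k a (i+1) - fdiff k a i := by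
  induction k generalizing a with
  | zero => simp [fdiff]
  | succ k ih =>
      exact ih (fun j => a (j+1) - a j)

lemma fdiff_eq_sum (k : ℕ) (a : ℕ → ℝ) (i : ℕ) :
    fdiff k a i = ∑ r ∈ range (k+1), (-1:ℝ)^(k-r) * (k.choose r : ℝ) * a (i+r) := by
  induction k generalizing a with
  | zero => simp [fdiff]
  | succ k ih =>
      show fdiff k (fun j => a (j+1) - a j) i = _
      rw [ih]
      have h1 : ∑ r ∈ range (k+1+1), (-1:ℝ)^(k+1-r) * ((k+1).choose r : ℝ) * a (i+r)
          = (∑ r ∈ range (k+1), (-1:ℝ)^(k-r) * ((k+1).choose (r+1) : ℝ) * a (i+(r+1)))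
            + (-1:ℝ)^(k+1) * a i := by
        rw [Finset.sum_range_succ']
        simp only [Nat.choose_zero_right, Nat.cast_one, Nat.add_sub_cancel]
        congr 1
        · refine Finset.sum_congr rfl fun r hr => ?_
          have : k + 1 - (r+1) = k - r := by omega
          rw [this]
        · simp
      rw [h1]
      have h2 : ∀ r, ((k+1).choose (r+1) : ℝ) = (k.choose r : ℝ) + (k.choose (r+1) : ℝ) := by
        intro r; rw [Nat.choose_succ_succ]; push_cast; ring
      have h3 : ∑ r ∈ range (k+1), (-1:ℝ)^(k-r) * ((k+1).choose (r+1) : ℝ) * a (i+(r+1))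
          = (∑ r ∈ range (k+1), (-1:ℝ)^(k-r) * (k.choose r : ℝ) * a (i+r+1))
            + ∑ r ∈ range (k+1), (-1:ℝ)^(k-r) * (k.choose (r+1) : ℝ) * a (i+r+1) := by
        rw [← Finset.sum_add_distrib]
        refine Finset.sum_congr rfl fun r hr => ?_
        rw [h2]; ring_nf
      rw [h3]
      have h4 : ∑ r ∈ range (k+1), (-1:ℝ)^(k-r) * (k.choose (r+1) : ℝ) * a (i+r+1)
          = ∑ r ∈ range k, (-1:ℝ)^(k-r) * (k.choose (r+1) : ℝ) * a (i+r+1) := by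
        rw [Finset.sum_range_succ]; simp
      have h5 : (∑ r ∈ range k, (-1:ℝ)^(k-r) * (k.choose (r+1) : ℝ) * a (i+r+1))
            + (-1:ℝ)^(k+1) * a i
          = - ∑ r ∈ range (k+1), (-1:ℝ)^(k-r) * (k.choose r : ℝ) * a (i+r) := by
        rw [Finset.sum_range_succ' (fun r => (-1:ℝ)^(k-r) * (k.choose r : ℝ) * a (i+r)) k]
        rw [neg_add, ← Finset.sum_neg_distrib]
        congr 1
        · refine Finset.sum_congr rfl fun r hr => ?_
          have hrk : r < k := Finset.mem_range.mp hr
          have : k - r = (k - (r+1)) + 1 := by omega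
          rw [this]; ring_nf
        · simp; ring
      rw [h4, add_assoc, h5]
      rw [← sub_eq_add_neg, ← Finset.sum_sub_distrib]
      exact Finset.sum_congr rfl fun r hr => by ring

lemma fdiff_sum {ι : Type*} (k : ℕ) (s : Finset ι) (f : ι → ℕ → ℝ) (n : ℕ) :
    fdiff k (fun j => ∑ i ∈ s, f i j) n = ∑ i ∈ s, fdiff k (f i) n := by
  simp only [fdiff_eq_sum, Finset.mul_sum]
  rw [Finset.sum_comm]

lemma fdiff_const_mul (k : ℕ) (c : ℝ) (a : ℕ → ℝ) (n : ℕ) :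
    fdiff k (fun j => c * a j) n = c * fdiff k a n := by
  simp only [fdiff_eq_sum, Finset.mul_sum]
  exact Finset.sum_congr rfl fun r hr => by ring

lemma fdiff_mul_const (k : ℕ) (c : ℝ) (a : ℕ → ℝ) (n : ℕ) :
    fdiff k (fun j => a j * c) n = fdiff k a n * c := by
  simp only [fdiff_eq_sum, Finset.sum_mul]
  exact Finset.sum_congr rfl fun r hr => by ring

lemma bern_hasDerivAt (n i : ℕ) (ξ : ℝ) :
    HasDerivAt (fun t => bern n i t)
      ((n.choose i : ℝ) * ((i:ℝ) * ξ ^ (i-1)) * (1-ξ) ^ (n-i)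
        - (n.choose i : ℝ) * ξ ^ i * (((n-i : ℕ):ℝ) * (1-ξ) ^ (n-i-1))) ξ := by
  have h1 : HasDerivAt (fun t : ℝ => (n.choose i : ℝ) * t ^ i)
      ((n.choose i : ℝ) * ((i:ℝ) * ξ ^ (i-1))) ξ := (hasDerivAt_pow i ξ).const_mul _
  have h2 : HasDerivAt (fun t : ℝ => (1-t) ^ (n-i))
      (-(((n-i : ℕ):ℝ) * (1-ξ) ^ (n-i-1))) ξ := by
    have hin : HasDerivAt (fun t : ℝ => 1 - t) (-1) ξ := by
      simpa using (hasDerivAt_id ξ).const_sub 1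
    have := (hasDerivAt_pow (n-i) (1-ξ)).comp ξ hin
    simpa [mul_comm, Function.comp_def] using this
  have := h1.fun_mul h2
  simp only [bern]
  exact this.congr_deriv (by ring)

lemma hasDerivAt_bernsum (m : ℕ) (a : ℕ → ℝ) (ξ : ℝ) :
    HasDerivAt (fun t => ∑ i ∈ range (m+2), a i * bern (m+1) i t)
      (((m:ℝ)+1) * ∑ i ∈ range (m+1), (a (i+1) - a i) * bern m i ξ) ξ := by
  have H : HasDerivAt (fun t => ∑ i ∈ range (m+2), a i * bern (m+1) i t)
      (∑ i ∈ range (m+2), a i *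
        (((m+1).choose i : ℝ) * ((i:ℝ) * ξ ^ (i-1)) * (1-ξ) ^ (m+1-i)
          - ((m+1).choose i : ℝ) * ξ ^ i * (((m+1-i : ℕ):ℝ) * (1-ξ) ^ (m+1-i-1)))) ξ :=
    HasDerivAt.fun_sum fun i _ => (bern_hasDerivAt (m+1) i ξ).const_mul (a i)
  convert H using 1
  simp only [mul_sub]
  rw [Finset.sum_sub_distrib]
  have e1 : ∑ i ∈ range (m+2), a i * (((m+1).choose i : ℝ) * ((i:ℝ) * ξ ^ (i-1)) * (1-ξ) ^ (m+1-i))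
      = ∑ i ∈ range (m+1), ((m:ℝ)+1) * (a (i+1) * bern m i ξ) := by
    rw [Finset.sum_range_succ']
    have hz : a 0 * (((m+1).choose 0 : ℝ) * (((0:ℕ):ℝ) * ξ ^ (0-1)) * (1-ξ) ^ (m+1-0)) = 0 := by
      simp
    rw [hz, add_zero]
    refine Finset.sum_congr rfl fun i hi => ?_
    have hc : ((m+1).choose (i+1) : ℝ) * ((i:ℝ)+1) = ((m:ℝ)+1) * (m.choose i : ℝ) := by
      have h : (m+1) * m.choose i = (m+1).choose (i+1) * (i+1) := Nat.add_one_mul_choose_eq m i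
      exact_mod_cast h.symm
    simp only [Nat.add_sub_cancel, Nat.succ_sub_succ, Nat.sub_zero, bern, Nat.cast_add,
      Nat.cast_one]
    linear_combination (a (i+1) * ξ^i * (1-ξ)^(m-i)) * hc
  have e2 : ∑ i ∈ range (m+2), a i * (((m+1).choose i : ℝ) * ξ ^ i * (((m+1-i : ℕ):ℝ) * (1-ξ) ^ (m+1-i-1)))
      = ∑ i ∈ range (m+1), ((m:ℝ)+1) * (a i * bern m i ξ) := by
    rw [Finset.sum_range_succ]
    have hz : a (m+1) * (((m+1).choose (m+1) : ℝ) * ξ ^ (m+1) * (((m+1-(m+1) : ℕ):ℝ) * (1-ξ) ^ (m+1-(m+1)-1))) = 0 := by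
      simp
    rw [hz, add_zero]
    refine Finset.sum_congr rfl fun i hi => ?_
    have him : i ≤ m := by have := Finset.mem_range.mp hi; omega
    have hc : ((m+1-i : ℕ):ℝ) * ((m+1).choose i : ℝ) = ((m:ℝ)+1) * (m.choose i : ℝ) := by
      have hnat : (m+1-i) * (m+1).choose i = (m+1) * m.choose i := by
        have h1 : (m+1).choose i = (m+1).choose (m+1-i) := (Nat.choose_symm (by omega)).symm
        have h2 : m.choose i = m.choose (m-i) := (Nat.choose_symm him).symm
        have h3 := Nat.add_one_mul_choose_eq m (m-i)
        have h4 : m - i + 1 = m + 1 - i := by omega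
        rw [h1, h2, ← h4, Nat.mul_comm]
        exact h3.symm
      exact_mod_cast hnat
    have hidx : m + 1 - i - 1 = m - i := by omega
    rw [hidx]
    simp only [bern]
    linear_combination (a i * ξ^i * (1-ξ)^(m-i)) * hc
  rw [e1, e2, ← Finset.sum_sub_distrib, Finset.mul_sum]
  exact Finset.sum_congr rfl fun i hi => by ring


lemma fact_div_mul (p k : ℕ) (h : k < p) :
    (p.factorial / (p-k).factorial) * (p - k) = p.factorial / (p-(k+1)).factorial := by
  set n := p - (k+1) with hn
  have h1 : p - k = n + 1 := by omega
  rw [h1]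
  have hdvd : (n+1).factorial ∣ p.factorial := Nat.factorial_dvd_factorial (by omega)
  have hmain : p.factorial = (p.factorial / (n+1).factorial) * (n+1).factorial :=
    (Nat.div_mul_cancel hdvd).symm
  have : p.factorial / n.factorial = (p.factorial / (n+1).factorial) * (n+1) := by
    conv_lhs => rw [hmain]
    rw [Nat.factorial_succ, ← Nat.mul_assoc, Nat.mul_div_cancel _ n.factorial_pos]
  omega

lemma iteratedDeriv_bernsum (p : ℕ) (k : ℕ) (hk : k ≤ p) (a : ℕ → ℝ) (ξ : ℝ) :
    iteratedDeriv k (fun t => ∑ i ∈ range (p+1), a i * bern p i t) ξ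
      = ((p.factorial / (p-k).factorial : ℕ) : ℝ)
        * ∑ i ∈ range (p-k+1), fdiff k a i * bern (p-k) i ξ := by
  induction k generalizing ξ with
  | zero => simp [fdiff, Nat.div_self p.factorial_pos]
  | succ k ih =>
      have hk' : k ≤ p := by omega
      have hkp : k < p := by omega
      rw [iteratedDeriv_succ]
      have hfun : iteratedDeriv k (fun t => ∑ i ∈ range (p+1), a i * bern p i t)
          = fun t => ∑ i ∈ range (p-k+1),
              (((p.factorial / (p-k).factorial : ℕ) : ℝ) * fdiff k a i) * bern (p-k) i t := by
        funext t
        rw [ih hk' t, Finset.mul_sum]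
        exact Finset.sum_congr rfl fun i hi => by ring
      rw [hfun]
      set m := p - (k+1) with hm
      have h1 : p - k = m + 1 := by omega
      have hder := hasDerivAt_bernsum m
        (fun i => ((p.factorial / (p-k).factorial : ℕ) : ℝ) * fdiff k a i) ξ
      rw [← h1] at hder
      have h2 : p - k + 1 = m + 2 := by omega
      rw [h2] at hfun ⊢
      rw [(HasDerivAt.deriv (by rw [h1] at hder ⊢; exact hder) : _)]
      have h3 : ((m:ℝ)+1) = ((p - k : ℕ) : ℝ) := by rw [h1]; push_cast; ring
      rw [h3, Finset.mul_sum, Finset.mul_sum]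
      refine Finset.sum_congr rfl fun i hi => ?_
      have h4 : fdiff (k+1) a i = fdiff k a (i+1) - fdiff k a i := by
        show fdiff k (fun j => a (j+1) - a j) i = _
        exact fdiff_shift k a i
      have h5 : ((p.factorial / (p-(k+1)).factorial : ℕ) : ℝ)
          = ((p.factorial / (p-k).factorial : ℕ) : ℝ) * ((p - k : ℕ) : ℝ) := by
        rw [← Nat.cast_mul, fact_div_mul p k hkp]
      rw [h4]
      have h6 : ((p.factorial / m.factorial : ℕ) : ℝ)
          = ((p.factorial / (m+1).factorial : ℕ) : ℝ) * ((p-k : ℕ) : ℝ) := by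
        rw [← Nat.cast_mul]
        congr 1
        rw [← h1, hm]
        exact (fact_div_mul p k hkp).symm
      rw [h6]
      ring

lemma bern_nonneg (m i : ℕ) {ξ : ℝ} (hξ : ξ ∈ Set.Icc (0:ℝ) 1) : 0 ≤ bern m i ξ := by
  obtain ⟨h0, h1⟩ := hξ
  unfold bern
  exact mul_nonneg (mul_nonneg (Nat.cast_nonneg _) (pow_nonneg h0 i))
    (pow_nonneg (by linarith) _)

lemma bern_sum_eq_one (m : ℕ) (ξ : ℝ) : ∑ i ∈ range (m+1), bern m i ξ = 1 := by
  have h := add_pow ξ (1-ξ) m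
  have h2 : ξ + (1-ξ) = 1 := by ring
  rw [h2, one_pow] at h
  calc ∑ i ∈ range (m+1), bern m i ξ
      = ∑ i ∈ range (m+1), ξ ^ i * (1-ξ) ^ (m-i) * (m.choose i : ℝ) :=
        Finset.sum_congr rfl fun i hi => by unfold bern; ring
    _ = 1 := h.symm

lemma bernsum_abs_le (m : ℕ) (b : ℕ → ℝ) (M : ℝ)
    (hM : ∀ i ∈ range (m+1), |b i| ≤ M) {ξ : ℝ} (hξ : ξ ∈ Set.Icc (0:ℝ) 1) :
    |∑ i ∈ range (m+1), b i * bern m i ξ| ≤ M := by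
  calc |∑ i ∈ range (m+1), b i * bern m i ξ|
      ≤ ∑ i ∈ range (m+1), |b i * bern m i ξ| := Finset.abs_sum_le_sum_abs _ _
    _ ≤ ∑ i ∈ range (m+1), M * bern m i ξ := by
        refine Finset.sum_le_sum fun i hi => ?_
        rw [abs_mul, abs_of_nonneg (bern_nonneg m i hξ)]
        exact mul_le_mul_of_nonneg_right (hM i hi) (bern_nonneg m i hξ)
    _ = M := by rw [← Finset.mul_sum, bern_sum_eq_one, mul_one]

/-- For a tensor-product Bernstein–Bézier function
`B(ξ₁,ξ₂) = Σ_{i,j} P_{ij} B_i^p(ξ₁) B_j^p(ξ₂)`, the mixed partial derivative of order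
`(k₁,k₂)` is bounded on `[0,1]²` by `(p!/(p−k₁)!)(p!/(p−k₂)!)` times the maximal absolute
mixed forward difference of the control values. -/
theorem tensor_bernstein_mixed_deriv_bound (p k₁ k₂ : ℕ) (hp : 1 ≤ p)
    (hk₁ : k₁ ≤ p) (hk₂ : k₂ ≤ p) (P : Fin (p + 1) × Fin (p + 1) → ℝ)
    (ξ₁ ξ₂ : ℝ) (h₁ : ξ₁ ∈ Set.Icc (0 : ℝ) 1) (h₂ : ξ₂ ∈ Set.Icc (0 : ℝ) 1) :
    |iteratedDeriv k₁ (fun x => iteratedDeriv k₂ (fun y =>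
        ∑ i : Fin (p + 1), ∑ j : Fin (p + 1), P (i, j) * bern p i x * bern p j y) ξ₂) ξ₁|
      ≤ ((p.factorial / (p - k₁).factorial : ℕ) : ℝ) *
          ((p.factorial / (p - k₂).factorial : ℕ) : ℝ) *
          Finset.univ.sup' Finset.univ_nonempty
            (fun ij : Fin (p - k₁ + 1) × Fin (p - k₂ + 1) =>
              |∑ r : Fin (k₁ + 1), ∑ s : Fin (k₂ + 1),
                (-1 : ℝ) ^ (k₁ - r.val) * (-1 : ℝ) ^ (k₂ - s.val) *
                  (k₁.choose r.val : ℝ) * (k₂.choose s.val : ℝ) *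
                  P (⟨ij.1.val + r.val, by have := ij.1.isLt; have := r.isLt; omega⟩,
                     ⟨ij.2.val + s.val, by have := ij.2.isLt; have := s.isLt; omega⟩)|) := by
  classical
  set P' : ℕ → ℕ → ℝ := fun i j =>
    if h : i ≤ p ∧ j ≤ p then P (⟨i, by omega⟩, ⟨j, by omega⟩) else 0 with hP'def
  set q₁ : ℝ := ((p.factorial / (p - k₁).factorial : ℕ) : ℝ) with hq₁
  set q₂ : ℝ := ((p.factorial / (p - k₂).factorial : ℕ) : ℝ) with hq₂
  set S : ℝ := Finset.univ.sup' Finset.univ_nonempty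
            (fun ij : Fin (p - k₁ + 1) × Fin (p - k₂ + 1) =>
              |∑ r : Fin (k₁ + 1), ∑ s : Fin (k₂ + 1),
                (-1 : ℝ) ^ (k₁ - r.val) * (-1 : ℝ) ^ (k₂ - s.val) *
                  (k₁.choose r.val : ℝ) * (k₂.choose s.val : ℝ) *
                  P (⟨ij.1.val + r.val, by have := ij.1.isLt; have := r.isLt; omega⟩,
                     ⟨ij.2.val + s.val, by have := ij.2.isLt; have := s.isLt; omega⟩)|) with hS
  set A : ℕ → ℝ := fun i =>
    q₂ * ∑ j ∈ range (p - k₂ + 1), fdiff k₂ (P' i) j * bern (p - k₂) j ξ₂ with hA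
  -- Step 1: rewrite the function of x
  have key : (fun x => iteratedDeriv k₂ (fun y =>
        ∑ i : Fin (p + 1), ∑ j : Fin (p + 1), P (i, j) * bern p i x * bern p j y) ξ₂)
      = fun x => ∑ i ∈ range (p + 1), A i * bern p i x := by
    funext x
    have step1 : (fun y => ∑ i : Fin (p + 1), ∑ j : Fin (p + 1),
          P (i, j) * bern p i x * bern p j y)
        = fun y => ∑ j ∈ range (p + 1),
            (∑ i ∈ range (p + 1), P' i j * bern p i x) * bern p j y := by
      funext y
      rw [Finset.sum_comm]
      rw [← Fin.sum_univ_eq_sum_range (fun j => (∑ i ∈ range (p + 1), P' i j * bern p i x)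
        * bern p j y) (p + 1)]
      refine Finset.sum_congr rfl fun j _ => ?_
      rw [Finset.sum_mul,
        ← Fin.sum_univ_eq_sum_range (fun i => P' i j.val * bern p i x * bern p j.val y) (p + 1)]
      refine Finset.sum_congr rfl fun i _ => ?_
      have hij : P' i.val j.val = P (i, j) := by
        simp only [hP'def]
        rw [dif_pos ⟨by omega, by omega⟩]
      rw [hij]
    rw [step1, iteratedDeriv_bernsum p k₂ hk₂ _ ξ₂, ← hq₂]
    have swap : ∀ j : ℕ, fdiff k₂ (fun jj => ∑ i ∈ range (p + 1), P' i jj * bern p i x) j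
        = ∑ i ∈ range (p + 1), fdiff k₂ (P' i) j * bern p i x := by
      intro j
      rw [fdiff_sum]
      exact Finset.sum_congr rfl fun i _ => fdiff_mul_const k₂ (bern p i x) (P' i) j
    calc q₂ * ∑ j ∈ range (p - k₂ + 1),
            fdiff k₂ (fun jj => ∑ i ∈ range (p + 1), P' i jj * bern p i x) j
              * bern (p - k₂) j ξ₂
        = ∑ j ∈ range (p - k₂ + 1), ∑ i ∈ range (p + 1),
            q₂ * (fdiff k₂ (P' i) j * bern (p - k₂) j ξ₂ * bern p i x) := by
          rw [Finset.mul_sum]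
          refine Finset.sum_congr rfl fun j _ => ?_
          rw [swap j, Finset.sum_mul, Finset.mul_sum]
          exact Finset.sum_congr rfl fun i _ => by ring
      _ = ∑ i ∈ range (p + 1), ∑ j ∈ range (p - k₂ + 1),
            q₂ * (fdiff k₂ (P' i) j * bern (p - k₂) j ξ₂ * bern p i x) := Finset.sum_comm
      _ = ∑ i ∈ range (p + 1), A i * bern p i x := by
          refine Finset.sum_congr rfl fun i _ => ?_
          simp only [hA]
          rw [Finset.mul_sum, Finset.sum_mul]
          exact Finset.sum_congr rfl fun j _ => by ring
  rw [key, iteratedDeriv_bernsum p k₁ hk₁ A ξ₁, ← hq₁]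
  -- bound
  have hq₁0 : 0 ≤ q₁ := Nat.cast_nonneg _
  have hq₂0 : 0 ≤ q₂ := Nat.cast_nonneg _
  have hE : ∀ i ∈ range (p - k₁ + 1), ∀ j ∈ range (p - k₂ + 1),
      |fdiff k₁ (fun ii => fdiff k₂ (P' ii) j) i| ≤ S := by
    intro i hi j hj
    have hi' : i < p - k₁ + 1 := Finset.mem_range.mp hi
    have hj' : j < p - k₂ + 1 := Finset.mem_range.mp hj
    have heq : fdiff k₁ (fun ii => fdiff k₂ (P' ii) j) i
        = ∑ r : Fin (k₁ + 1), ∑ s : Fin (k₂ + 1),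
            (-1 : ℝ) ^ (k₁ - r.val) * (-1 : ℝ) ^ (k₂ - s.val) *
              (k₁.choose r.val : ℝ) * (k₂.choose s.val : ℝ) *
              P (⟨i + r.val, by have := r.isLt; omega⟩,
                 ⟨j + s.val, by have := s.isLt; omega⟩) := by
      rw [fdiff_eq_sum]
      rw [← Fin.sum_univ_eq_sum_range (fun r => (-1:ℝ)^(k₁-r) * (k₁.choose r : ℝ)
        * fdiff k₂ (P' (i+r)) j) (k₁+1)]
      refine Finset.sum_congr rfl fun r _ => ?_
      rw [fdiff_eq_sum]
      rw [Finset.mul_sum,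
        ← Fin.sum_univ_eq_sum_range (fun s => (-1:ℝ)^(k₁-r.val) * (k₁.choose r.val : ℝ)
          * ((-1:ℝ)^(k₂-s) * (k₂.choose s : ℝ) * P' (i+r.val) (j+s))) (k₂+1)]
      refine Finset.sum_congr rfl fun s _ => ?_
      have hP : P' (i + r.val) (j + s.val)
          = P (⟨i + r.val, by have := r.isLt; omega⟩, ⟨j + s.val, by have := s.isLt; omega⟩) := by
        simp only [hP'def]
        rw [dif_pos ⟨by have := r.isLt; omega, by have := s.isLt; omega⟩]
      rw [hP]
      ring
    rw [heq, hS]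
    exact Finset.le_sup'
      (fun ij : Fin (p - k₁ + 1) × Fin (p - k₂ + 1) =>
        |∑ r : Fin (k₁ + 1), ∑ s : Fin (k₂ + 1),
          (-1 : ℝ) ^ (k₁ - r.val) * (-1 : ℝ) ^ (k₂ - s.val) *
            (k₁.choose r.val : ℝ) * (k₂.choose s.val : ℝ) *
            P (⟨ij.1.val + r.val, by have := ij.1.isLt; have := r.isLt; omega⟩,
               ⟨ij.2.val + s.val, by have := ij.2.isLt; have := s.isLt; omega⟩)|)
      (Finset.mem_univ ((⟨i, hi'⟩, ⟨j, hj'⟩) : Fin (p - k₁ + 1) × Fin (p - k₂ + 1)))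
  have hAbound : ∀ i ∈ range (p - k₁ + 1), |fdiff k₁ A i| ≤ q₂ * S := by
    intro i hi
    have hlin : fdiff k₁ A i = q₂ * ∑ j ∈ range (p - k₂ + 1),
        fdiff k₁ (fun ii => fdiff k₂ (P' ii) j) i * bern (p - k₂) j ξ₂ := by
      rw [hA]
      rw [fdiff_const_mul]
      congr 1
      rw [fdiff_sum]
      exact Finset.sum_congr rfl fun j _ =>
        fdiff_mul_const k₁ (bern (p - k₂) j ξ₂) (fun ii => fdiff k₂ (P' ii) j) i
    rw [hlin, abs_mul, abs_of_nonneg hq₂0]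
    exact mul_le_mul_of_nonneg_left
      (bernsum_abs_le (p - k₂) _ S (fun j hj => hE i hi j hj) h₂) hq₂0
  calc |q₁ * ∑ i ∈ range (p - k₁ + 1), fdiff k₁ A i * bern (p - k₁) i ξ₁|
      = q₁ * |∑ i ∈ range (p - k₁ + 1), fdiff k₁ A i * bern (p - k₁) i ξ₁| := by
        rw [abs_mul, abs_of_nonneg hq₁0]
    _ ≤ q₁ * (q₂ * S) := mul_le_mul_of_nonneg_left
        (bernsum_abs_le (p - k₁) _ (q₂ * S) hAbound h₁) hq₁0
    _ = q₁ * q₂ * S := by ring
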